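/- arXiv:2604.22149 — 2 statements merged into one kernel-verified Lean document; each statement's English description precedes it below -/
import Mathlib

section
/- Under the hypotheses of the previous statement, by induction: if at time 0 there exists a safe control sequence of length H from the current state whose rollout avoids L and terminates in C, then for every t ≥ 0 the shifting-and-appending construction yields a control sequence of length H from the state at time t whose rollout avoids L and terminates in C. In particular, the closed-loop state trajectory obtained by always applying the first element of the stored safe sequence never enters L. -/
/-- Rollout of a deterministic system: `x_0 = x`, `x_{k+1} = f(x_k, u_k)`. -/
def rollout {X U : Type*} (f : X → U → X) (x : X) (u : ℕ → U) : ℕ → X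
  | 0 => x
  | k + 1 => f (rollout f x u k) (u k)

/-- Closed-loop safety by induction: if the stored safe sequence at time `0` has a rollout
avoiding `L` and terminating in the safe control invariant set `C`, and at each step the
state advances by the first stored control while the stored sequence is shifted and the
invariance input `u_inv` of the terminal state is appended, then at every time `t` the
stored sequence's rollout avoids `L` and terminates in `C`; in particular the closed-loop
trajectory never enters `L`. -/
theorem stmt4 {X U : Type*} (f : X → U → X) (L C : Set X) (uinv : X → U)
    (hdisj : ∀ y ∈ C, y ∉ L) (hinv : ∀ y ∈ C, f y (uinv y) ∈ C)
    (H : ℕ) (hH : 1 ≤ H)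
    (xs : ℕ → X) (Us : ℕ → ℕ → U)
    (h0safe : ∀ k ≤ H, rollout f (xs 0) (Us 0) k ∉ L)
    (h0term : rollout f (xs 0) (Us 0) H ∈ C)
    (hstep : ∀ t, xs (t + 1) = f (xs t) (Us t 0))
    (hshift : ∀ t k, Us (t + 1) k =
      if k + 1 < H then Us t (k + 1) else uinv (rollout f (xs t) (Us t) H)) :
    ∀ t, ((∀ k ≤ H, rollout f (xs t) (Us t) k ∉ L) ∧
        rollout f (xs t) (Us t) H ∈ C) ∧ xs t ∉ L := by
  obtain ⟨m, rfl⟩ : ∃ m, H = m + 1 := ⟨H - 1, by omega⟩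
  have main : ∀ t, (∀ k ≤ m + 1, rollout f (xs t) (Us t) k ∉ L) ∧
      rollout f (xs t) (Us t) (m + 1) ∈ C := by
    intro t
    induction t with
    | zero => exact ⟨h0safe, h0term⟩
    | succ t ih =>
      obtain ⟨ihsafe, ihterm⟩ := ih
      have heq : ∀ k, k < m + 1 →
          rollout f (xs (t + 1)) (Us (t + 1)) k = rollout f (xs t) (Us t) (k + 1) := by
        intro k
        induction k with
        | zero => intro _; simpa [rollout] using hstep t
        | succ k ihk =>
          intro hk
          have h1 : k < m + 1 := by omega
          simp only [rollout, ihk h1, hshift t k, if_pos (by omega : k + 1 < m + 1)]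
      have hterm' : rollout f (xs (t + 1)) (Us (t + 1)) (m + 1) ∈ C := by
        have : rollout f (xs (t + 1)) (Us (t + 1)) (m + 1)
            = f (rollout f (xs t) (Us t) (m + 1)) (uinv (rollout f (xs t) (Us t) (m + 1))) := by
          simp only [rollout, heq m (by omega), hshift t m,
            if_neg (by omega : ¬ m + 1 < m + 1)]
        rw [this]
        exact hinv _ ihterm
      refine ⟨fun k hk => ?_, hterm'⟩
      rcases Nat.lt_or_ge k (m + 1) with h | h
      · rw [heq k h]; exact ihsafe (k + 1) (by omega)
      · have : k = m + 1 := by omega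
        subst this
        exact hdisj _ hterm'
  intro t
  refine ⟨main t, ?_⟩
  have := (main t).1 0 (by omega)
  simpa [rollout] using this
end

section
/- Probability that the empirical minimum underestimates the ε-quantile: let C : Ω → ℝ be measurable under probability measure μ, and let q_ε be any real number with μ({C < q_ε}) ≤ ε and μ({C ≤ q_ε}) ≥ ε. Then for N i.i.d. samples, Pr(μ({C < min_i C(ω_i)}) > ε) ≤ Pr(∀ i, C(ω_i) > q_ε) ≤ (1 − ε)^N. -/
open MeasureTheory

/-- Quantile bound for the empirical minimum: if `q_ε` is an `ε`-quantile of `C` under `μ`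
(`μ(C < q_ε) ≤ ε ≤ μ(C ≤ q_ε)`), then for `N` i.i.d. samples,
`Pr(μ({C < min_i C(ω_i)}) > ε) ≤ Pr(∀ i, C(ω_i) > q_ε) ≤ (1 − ε)^N`. -/
theorem stmt11 {Ω : Type*} [MeasurableSpace Ω] (μ : Measure Ω) [IsProbabilityMeasure μ]
    (C : Ω → ℝ) (hC : Measurable C) (ε : ℝ) (hε : ε ∈ Set.Ioo (0 : ℝ) 1)
    (qε : ℝ) (hq1 : μ {w | C w < qε} ≤ ENNReal.ofReal ε)
    (hq2 : ENNReal.ofReal ε ≤ μ {w | C w ≤ qε})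
    (N : ℕ) (hN : 0 < N) :
    (Measure.pi fun _ : Fin N => μ)
        {ω : Fin N → Ω | ENNReal.ofReal ε < μ {w | C w < ⨅ i, C (ω i)}} ≤
      (Measure.pi fun _ : Fin N => μ) {ω : Fin N → Ω | ∀ i, qε < C (ω i)} ∧
    (Measure.pi fun _ : Fin N => μ) {ω : Fin N → Ω | ∀ i, qε < C (ω i)} ≤
      ENNReal.ofReal ((1 - ε) ^ N) := by
  constructor
  · apply measure_mono
    intro ω hω i
    by_contra h
    push_neg at h
    have hinf : (⨅ j, C (ω j)) ≤ C (ω i) := ciInf_le (Set.Finite.bddBelow (Set.finite_range _)) i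
    have hsub : {w | C w < ⨅ j, C (ω j)} ⊆ {w | C w < qε} := fun w hw =>
      lt_of_lt_of_le hw (hinf.trans h)
    exact absurd ((measure_mono hsub).trans hq1) (not_le.mpr hω)
  · have hset : {ω : Fin N → Ω | ∀ i, qε < C (ω i)} =
        Set.pi Set.univ (fun _ : Fin N => {w | qε < C w}) := by
      ext ω; simp [Set.mem_pi]
    rw [hset, Measure.pi_pi]
    have hμ : μ {w | qε < C w} ≤ ENNReal.ofReal (1 - ε) := by
      have hc : {w | qε < C w} = {w | C w ≤ qε}ᶜ := by ext w; simp [not_le]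
      rw [hc, measure_compl (measurableSet_le hC measurable_const) (measure_ne_top μ _)]
      rw [measure_univ]
      calc 1 - μ {w | C w ≤ qε} ≤ 1 - ENNReal.ofReal ε := tsub_le_tsub_left hq2 1
        _ = ENNReal.ofReal (1 - ε) := by
            rw [← ENNReal.ofReal_one, ← ENNReal.ofReal_sub _ hε.1.le]
    calc ∏ _i : Fin N, μ {w | qε < C w} ≤ ∏ _i : Fin N, ENNReal.ofReal (1 - ε) :=
          Finset.prod_le_prod' fun _ _ => hμ
      _ = ENNReal.ofReal (1 - ε) ^ N := by simp
      _ = ENNReal.ofReal ((1 - ε) ^ N) := (ENNReal.ofReal_pow (by linarith [hε.2]) N).symm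
end
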